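/- Let d ≥ 1 and N ≥ 1 be integers, and let m, n : {1,…,d} → ℕ with ∑_{i=1}^d m_i = ∑_{i=1}^d n_i = N. Let G_1, …, G_N be independent real random variables on a probability space, each distributed according to the Gamma distribution with shape 1/N and rate 1. Set Z = ∑_{j=1}^N G_j, M_i = ∑_{k ≤ i} m_k, N_i = ∑_{k ≤ i} n_k (with M_0 = N_0 = 0), and define X_i = (∑_{j = M_{i−1}+1}^{M_i} G_j)/Z and Y_i = (∑_{j = N_{i−1}+1}^{N_i} G_j)/Z. Then for every i ∈ {1,…,d}, E[ |X_i − Y_i| ] ≤ |M_{i−1} − N_{i−1}|/N + |M_i − N_i|/N. -/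

import Mathlib

open MeasureTheory ProbabilityTheory Finset
open scoped ENNReal NNReal


lemma map_tuple_eq_pi {Ω : Type*} [MeasurableSpace Ω] (μ : Measure Ω) [IsProbabilityMeasure μ]
    {N : ℕ} (G : Fin N → Ω → ℝ) (hGmeas : ∀ j, Measurable (G j))
    (hGindep : iIndepFun G μ) (ν : Measure ℝ) [IsProbabilityMeasure ν]
    (hGdist : ∀ j, μ.map (G j) = ν) :
    μ.map (fun ω j => G j ω) = Measure.pi (fun _ => ν) := by
  refine (Measure.pi_eq fun s hs => ?_).symm
  rw [Measure.map_apply (measurable_pi_lambda _ hGmeas) (MeasurableSet.univ_pi hs)]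
  have h1 : (fun ω j => G j ω) ⁻¹' Set.pi Set.univ s = ⋂ j ∈ Finset.univ, G j ⁻¹' s j := by
    ext ω; simp [Set.mem_pi]
  rw [h1, hGindep.measure_inter_preimage_eq_mul Finset.univ (fun i _ => hs i)]
  exact Finset.prod_congr rfl fun j _ => by rw [← hGdist j, Measure.map_apply (hGmeas j) (hs j)]

lemma gammaMeasure_Iic_zero {a r : ℝ} : gammaMeasure a r (Set.Iic 0) = 0 := by
  rw [gammaMeasure, withDensity_apply _ measurableSet_Iic]
  have h : (Set.Iic (0:ℝ)) = Set.Iio 0 ∪ {0} := by ext x; simp [le_iff_lt_or_eq]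
  rw [h, lintegral_union (measurableSet_singleton 0)
    (by rw [Set.disjoint_left]; intro x hx; simp at hx ⊢; exact ne_of_lt hx)]
  rw [ProbabilityTheory.lintegral_gammaPDF_of_nonpos le_rfl]
  simp [Measure.restrict_singleton]

lemma gamma_ratio_lintegral {N : ℕ} (hN : 1 ≤ N)
    {Ω : Type*} [MeasurableSpace Ω] (μ : Measure Ω) [IsProbabilityMeasure μ]
    (G : Fin N → Ω → ℝ) (hGmeas : ∀ j, Measurable (G j))
    (hGindep : iIndepFun G μ)
    (hGdist : ∀ j, μ.map (G j) = gammaMeasure (1 / N) 1) (j : Fin N) :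
    ∫⁻ ω, ENNReal.ofReal (G j ω / ∑ k, G k ω) ∂μ = (N : ℝ≥0∞)⁻¹ := by
  have hNpos : (0:ℝ) < N := by exact_mod_cast hN
  set ν := gammaMeasure (1 / N) 1 with hν
  haveI : IsProbabilityMeasure ν := isProbabilityMeasure_gammaMeasure (by positivity) one_pos
  set π := Measure.pi (fun _ : Fin N => ν) with hπ
  have hT : Measurable (fun ω (j : Fin N) => G j ω) := measurable_pi_lambda _ hGmeas
  have hmap : μ.map (fun ω j => G j ω) = π := map_tuple_eq_pi μ G hGmeas hGindep ν hGdist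
  set f : Fin N → (Fin N → ℝ) → ℝ≥0∞ := fun j x => ENNReal.ofReal (x j / ∑ k, x k) with hf
  have hfm : ∀ j, Measurable (f j) := fun j =>
    ENNReal.measurable_ofReal.comp ((measurable_pi_apply j).div
      (Finset.measurable_sum _ fun k _ => measurable_pi_apply k))
  have key : ∀ j, ∫⁻ ω, f j (fun k => G k ω) ∂μ = ∫⁻ x, f j x ∂π := fun j => by
    rw [← hmap, lintegral_map (hfm j) hT]
  set z : Fin N := ⟨0, hN⟩ with hzdef
  have hsym : ∀ j : Fin N, ∫⁻ x, f j x ∂π = ∫⁻ x, f z x ∂π := by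
    intro j
    have hmp := ((measurePreserving_piCongrLeft (fun _ : Fin N => ν)
      (Equiv.swap j z)).symm _)
    have h2 := hmp.lintegral_comp (hfm j)
    have h3 : ∀ x : Fin N → ℝ,
        f j ((MeasurableEquiv.piCongrLeft (fun _ : Fin N => ℝ) (Equiv.swap j z)).symm x)
          = f z x := by
      intro x
      have hx : ((MeasurableEquiv.piCongrLeft (fun _ : Fin N => ℝ)
          (Equiv.swap j z)).symm x) = fun a => x ((Equiv.swap j z) a) := by
        funext a
        simp [MeasurableEquiv.piCongrLeft, MeasurableEquiv.symm]
      rw [hx]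
      simp only [hf]
      rw [Equiv.sum_comp (Equiv.swap j z) x, Equiv.swap_apply_left]
    simp_rw [h3] at h2
    exact h2.symm
  have hone : ∑ j : Fin N, ∫⁻ ω, f j (fun k => G k ω) ∂μ = 1 := by
    have hsum := lintegral_finset_sum (μ := μ) Finset.univ
      (f := fun j ω => f j (fun k => G k ω)) (fun j _ => (hfm j).comp hT)
    rw [← hsum]
    have hae : ∀ᵐ ω ∂μ, (∑ j : Fin N, f j (fun k => G k ω)) = 1 := by
      have hpos : ∀ᵐ ω ∂μ, ∀ k, 0 < G k ω := by
        rw [ae_all_iff]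
        intro k
        rw [ae_iff]
        have h4 : {ω | ¬ 0 < G k ω} = G k ⁻¹' (Set.Iic 0) := by ext ω; simp
        rw [h4, ← Measure.map_apply (hGmeas k) measurableSet_Iic, hGdist k,
          gammaMeasure_Iic_zero]
      filter_upwards [hpos] with ω hω
      have hZ : 0 < ∑ k, G k ω := Finset.sum_pos (fun k _ => hω k) ⟨z, mem_univ _⟩
      simp only [hf]
      rw [← ENNReal.ofReal_sum_of_nonneg (fun j _ => div_nonneg (hω j).le hZ.le),
        ← Finset.sum_div, div_self hZ.ne', ENNReal.ofReal_one]
    rw [lintegral_congr_ae hae, lintegral_one, measure_univ]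
  simp_rw [key, hsym] at hone
  rw [Finset.sum_const, card_univ, Fintype.card_fin, nsmul_eq_mul] at hone
  have hc : ∫⁻ x, f z x ∂π = (N : ℝ≥0∞)⁻¹ := by
    exact ENNReal.eq_inv_of_mul_eq_one_left (by rw [mul_comm]; exact hone)
  rw [show (fun ω => ENNReal.ofReal (G j ω / ∑ k, G k ω)) = fun ω => f j (fun k => G k ω) from rfl]
  rw [key j, hsym j, hc]

lemma gamma_ae_pos {N : ℕ} {Ω : Type*} [MeasurableSpace Ω] (μ : Measure Ω)
    (G : Fin N → Ω → ℝ) (hGmeas : ∀ j, Measurable (G j))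
    (hGdist : ∀ j, μ.map (G j) = gammaMeasure (1 / N) 1) :
    ∀ᵐ ω ∂μ, ∀ k, 0 < G k ω := by
  rw [ae_all_iff]
  intro k
  rw [ae_iff]
  have h4 : {ω | ¬ 0 < G k ω} = G k ⁻¹' (Set.Iic 0) := by ext ω; simp
  rw [h4, ← Measure.map_apply (hGmeas k) measurableSet_Iic, hGdist k, gammaMeasure_Iic_zero]

/-- Coupling bound for grouped sums of i.i.d. `Gamma(1/N, 1)` random
variables: with `X i` and `Y i` the normalized block sums of `G` over the blocks determined
by the partial sums `SM`, `SN` of `m` and `n`, one has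
`E |X i − Y i| ≤ |SM i − SN i|/N + |SM (i+1) − SN (i+1)|/N` for every `i`. -/
theorem gamma_block_coupling_single {d N : ℕ} (hd : 1 ≤ d) (hN : 1 ≤ N)
    (m n : Fin d → ℕ) (hm : ∑ i, m i = N) (hn : ∑ i, n i = N)
    {Ω : Type*} [MeasurableSpace Ω] (μ : Measure Ω) [IsProbabilityMeasure μ]
    (G : Fin N → Ω → ℝ) (hGmeas : ∀ j, Measurable (G j))
    (hGindep : iIndepFun G μ)
    (hGdist : ∀ j, μ.map (G j) = gammaMeasure (1 / N) 1)
    (Z : Ω → ℝ) (hZ : ∀ ω, Z ω = ∑ j, G j ω)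
    (SM SN : ℕ → ℕ)
    (hSM : ∀ i : ℕ, SM i = ∑ k ∈ univ.filter (fun k : Fin d => (k : ℕ) < i), m k)
    (hSN : ∀ i : ℕ, SN i = ∑ k ∈ univ.filter (fun k : Fin d => (k : ℕ) < i), n k)
    (X Y : Fin d → Ω → ℝ)
    (hX : ∀ (i : Fin d) (ω : Ω), X i ω =
      (∑ j ∈ univ.filter (fun j : Fin N => SM (i : ℕ) ≤ (j : ℕ) ∧ (j : ℕ) < SM ((i : ℕ) + 1)),
        G j ω) / Z ω)
    (hY : ∀ (i : Fin d) (ω : Ω), Y i ω =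
      (∑ j ∈ univ.filter (fun j : Fin N => SN (i : ℕ) ≤ (j : ℕ) ∧ (j : ℕ) < SN ((i : ℕ) + 1)),
        G j ω) / Z ω) :
    ∀ i : Fin d,
      ∫⁻ ω, ENNReal.ofReal |X i ω - Y i ω| ∂μ ≤
        ENNReal.ofReal (|(SM (i : ℕ) : ℝ) - (SN (i : ℕ) : ℝ)| / N +
          |(SM ((i : ℕ) + 1) : ℝ) - (SN ((i : ℕ) + 1) : ℝ)| / N) := by
  intro i
  have hNpos : (0:ℝ) < N := by exact_mod_cast hN
  set a1 := SM (i : ℕ) with ha1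
  set a2 := SM ((i : ℕ) + 1) with ha2
  set b1 := SN (i : ℕ) with hb1
  set b2 := SN ((i : ℕ) + 1) with hb2
  set A : Finset (Fin N) := univ.filter (fun j : Fin N => a1 ≤ (j : ℕ) ∧ (j : ℕ) < a2) with hA
  set B : Finset (Fin N) := univ.filter (fun j : Fin N => b1 ≤ (j : ℕ) ∧ (j : ℕ) < b2) with hB
  set S : Finset (Fin N) := (A \ B) ∪ (B \ A) with hS
  have hZmeas : Measurable Z := by
    have h : Z = fun ω => ∑ j, G j ω := funext hZ
    rw [h]; exact Finset.measurable_sum _ fun j _ => hGmeas j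
  have hratio : ∀ j, ∫⁻ ω, ENNReal.ofReal (G j ω / Z ω) ∂μ = (N : ℝ≥0∞)⁻¹ := by
    intro j
    simp_rw [hZ]
    exact gamma_ratio_lintegral hN μ G hGmeas hGindep hGdist j
  have hpos := gamma_ae_pos μ G hGmeas hGdist
  have hdisj : Disjoint (A \ B) (B \ A) := disjoint_sdiff_sdiff
  have hbound : ∀ᵐ ω ∂μ, ENNReal.ofReal |X i ω - Y i ω| ≤
      ∑ j ∈ S, ENNReal.ofReal (G j ω / Z ω) := by
    filter_upwards [hpos] with ω hω
    have hZpos : 0 < Z ω := by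
      rw [hZ]; exact Finset.sum_pos (fun k _ => hω k) ⟨⟨0, hN⟩, mem_univ _⟩
    have hdiff : (∑ j ∈ A, G j ω) - (∑ j ∈ B, G j ω) =
        (∑ j ∈ A \ B, G j ω) - (∑ j ∈ B \ A, G j ω) := by
      rw [← Finset.sum_inter_add_sum_sdiff A B (fun j => G j ω),
        ← Finset.sum_inter_add_sum_sdiff B A (fun j => G j ω), Finset.inter_comm]
      ring
    have h1 : |X i ω - Y i ω| ≤ (∑ j ∈ S, G j ω) / Z ω := by
      rw [hX, hY, div_sub_div_same, abs_div, abs_of_pos hZpos]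
      rw [show (univ.filter (fun j : Fin N => SM (i:ℕ) ≤ (j:ℕ) ∧ (j:ℕ) < SM ((i:ℕ)+1))) = A from rfl]
      rw [show (univ.filter (fun j : Fin N => SN (i:ℕ) ≤ (j:ℕ) ∧ (j:ℕ) < SN ((i:ℕ)+1))) = B from rfl]
      rw [hdiff, hS, Finset.sum_union hdisj]
      rw [div_le_div_iff_of_pos_right hZpos]
      have hx : 0 ≤ ∑ j ∈ A \ B, G j ω := Finset.sum_nonneg fun j _ => (hω j).le
      have hy : 0 ≤ ∑ j ∈ B \ A, G j ω := Finset.sum_nonneg fun j _ => (hω j).le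
      rcases abs_cases ((∑ j ∈ A \ B, G j ω) - (∑ j ∈ B \ A, G j ω)) with ⟨h, _⟩ | ⟨h, _⟩ <;>
        rw [h] <;> linarith
    calc ENNReal.ofReal |X i ω - Y i ω| ≤ ENNReal.ofReal ((∑ j ∈ S, G j ω) / Z ω) :=
          ENNReal.ofReal_le_ofReal h1
      _ = ∑ j ∈ S, ENNReal.ofReal (G j ω / Z ω) := by
          rw [Finset.sum_div,
            ENNReal.ofReal_sum_of_nonneg (fun j _ => div_nonneg (hω j).le hZpos.le)]
  set k1 := (a1 - b1) + (b1 - a1) with hk1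
  set k2 := (a2 - b2) + (b2 - a2) with hk2
  have hcard : S.card ≤ k1 + k2 := by
    rw [hS, Finset.card_union_of_disjoint hdisj]
    have h1 : (A \ B).card ≤
        ((Finset.Ico a1 (min a2 b1)) ∪ (Finset.Ico (max a1 b2) a2)).card := by
      rw [← Finset.card_image_of_injOn (Set.injOn_of_injective Fin.val_injective)]
      apply Finset.card_le_card
      intro x hx
      simp only [Finset.mem_image] at hx
      obtain ⟨j, hj, rfl⟩ := hx
      simp only [hA, hB, Finset.mem_sdiff, Finset.mem_filter, Finset.mem_univ, true_and,
        not_and, not_lt] at hj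
      simp only [Finset.mem_union, Finset.mem_Ico, lt_min_iff, max_le_iff]
      omega
    have h2 : (B \ A).card ≤
        ((Finset.Ico b1 (min b2 a1)) ∪ (Finset.Ico (max b1 a2) b2)).card := by
      rw [← Finset.card_image_of_injOn (Set.injOn_of_injective Fin.val_injective)]
      apply Finset.card_le_card
      intro x hx
      simp only [Finset.mem_image] at hx
      obtain ⟨j, hj, rfl⟩ := hx
      simp only [hA, hB, Finset.mem_sdiff, Finset.mem_filter, Finset.mem_univ, true_and,
        not_and, not_lt] at hj
      simp only [Finset.mem_union, Finset.mem_Ico, lt_min_iff, max_le_iff]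
      omega
    have h1' := h1.trans (Finset.card_union_le _ _)
    have h2' := h2.trans (Finset.card_union_le _ _)
    simp only [Nat.card_Ico] at h1' h2'
    omega
  have habs1 : |(a1 : ℝ) - b1| = (k1 : ℝ) := by
    rcases le_total a1 b1 with h | h
    · rw [abs_of_nonpos (by exact sub_nonpos.2 (Nat.cast_le.2 h)), hk1,
        Nat.sub_eq_zero_of_le h, zero_add, Nat.cast_sub h]
      ring
    · rw [abs_of_nonneg (by exact sub_nonneg.2 (Nat.cast_le.2 h)), hk1,
        Nat.sub_eq_zero_of_le h, add_zero, Nat.cast_sub h]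
  have habs2 : |(a2 : ℝ) - b2| = (k2 : ℝ) := by
    rcases le_total a2 b2 with h | h
    · rw [abs_of_nonpos (by exact sub_nonpos.2 (Nat.cast_le.2 h)), hk2,
        Nat.sub_eq_zero_of_le h, zero_add, Nat.cast_sub h]
      ring
    · rw [abs_of_nonneg (by exact sub_nonneg.2 (Nat.cast_le.2 h)), hk2,
        Nat.sub_eq_zero_of_le h, add_zero, Nat.cast_sub h]
  have hrhs : ENNReal.ofReal (|(a1 : ℝ) - b1| / N + |(a2 : ℝ) - b2| / N)
      = ((k1 + k2 : ℕ) : ℝ≥0∞) * ((N : ℝ≥0∞))⁻¹ := by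
    rw [habs1, habs2, ← add_div, ← Nat.cast_add,
      ENNReal.ofReal_div_of_pos hNpos, ENNReal.ofReal_natCast, ENNReal.ofReal_natCast,
      div_eq_mul_inv]
  calc ∫⁻ ω, ENNReal.ofReal |X i ω - Y i ω| ∂μ
      ≤ ∫⁻ ω, ∑ j ∈ S, ENNReal.ofReal (G j ω / Z ω) ∂μ := lintegral_mono_ae hbound
    _ = ∑ j ∈ S, ∫⁻ ω, ENNReal.ofReal (G j ω / Z ω) ∂μ :=
        lintegral_finset_sum S (fun j _ => ENNReal.measurable_ofReal.comp
          ((hGmeas j).div hZmeas))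
    _ = (S.card : ℝ≥0∞) * ((N : ℝ≥0∞))⁻¹ := by
        rw [Finset.sum_congr rfl (fun j _ => hratio j), Finset.sum_const, nsmul_eq_mul]
    _ ≤ ((k1 + k2 : ℕ) : ℝ≥0∞) * ((N : ℝ≥0∞))⁻¹ :=
        mul_le_mul_left (by exact_mod_cast hcard) _
    _ = ENNReal.ofReal (|(a1 : ℝ) - b1| / N + |(a2 : ℝ) - b2| / N) := hrhs.symm
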